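/- Let V and W be finite-dimensional real inner product spaces. Let a : V × V → ℝ be a bilinear form which is coercive, i.e. there is α > 0 with a(v, v) ≥ α·‖v‖² for all v ∈ V; let d : W × W → ℝ be a positive semidefinite bilinear form; let b : V × W → ℝ be a bilinear form satisfying the inf-sup condition: there is β > 0 such that for every q ∈ W there exists v ∈ V with v ≠ 0 and b(v, q) ≥ β·‖v‖·‖q‖; and let c₀ ≥ 0, τ > 0. Then for every pair of linear functionals F : V → ℝ and G : W → ℝ there exists a unique pair (u, p) ∈ V × W such that a(u, v) − b(v, p) = F(v) for all v ∈ V, and c₀·⟨p, q⟩ + b(u, q) + τ·d(p, q) = G(q) for all q ∈ W. -/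
import Mathlib


open scoped RealInnerProductSpace

lemma homogeneous_zero
    {V W : Type*} [NormedAddCommGroup V] [InnerProductSpace ℝ V]
    [NormedAddCommGroup W] [InnerProductSpace ℝ W]
    (a : V →ₗ[ℝ] V →ₗ[ℝ] ℝ)
    (α : ℝ) (hα : 0 < α) (ha_coercive : ∀ v : V, α * ‖v‖ ^ 2 ≤ a v v)
    (d : W →ₗ[ℝ] W →ₗ[ℝ] ℝ) (hd_pos : ∀ q : W, 0 ≤ d q q)
    (b : V →ₗ[ℝ] W →ₗ[ℝ] ℝ)
    (β : ℝ) (hβ : 0 < β)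
    (hinfsup : ∀ q : W, ∃ v : V, v ≠ 0 ∧ β * ‖v‖ * ‖q‖ ≤ b v q)
    (c₀ : ℝ) (hc₀ : 0 ≤ c₀) (τ : ℝ) (hτ : 0 < τ)
    (u : V) (p : W)
    (h1 : ∀ v : V, a u v - b v p = 0)
    (h2 : ∀ q : W, c₀ * ⟪p, q⟫ + b u q + τ * d p q = 0) :
    u = 0 ∧ p = 0 := by
  have hup : a u u = b u p := by have := h1 u; linarith
  have hpp := h2 p
  have hsum : a u u + c₀ * ⟪p, p⟫ + τ * d p p = 0 := by
    rw [hup]; linarith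
  have h0 : (0:ℝ) ≤ c₀ * ⟪p, p⟫ := mul_nonneg hc₀ real_inner_self_nonneg
  have h0' : (0:ℝ) ≤ τ * d p p := mul_nonneg hτ.le (hd_pos p)
  have hau : a u u ≤ 0 := by linarith
  have hcoer := ha_coercive u
  have hu0 : u = 0 := by
    by_contra hne
    have hn : 0 < ‖u‖ := norm_pos_iff.mpr hne
    have : 0 < α * ‖u‖ ^ 2 := by positivity
    linarith
  refine ⟨hu0, ?_⟩
  obtain ⟨v, hv0, hv⟩ := hinfsup p
  have hbvp : b v p = 0 := by have := h1 v; subst hu0; simpa using this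
  have hn : 0 < ‖v‖ := norm_pos_iff.mpr hv0
  have : β * ‖v‖ * ‖p‖ ≤ 0 := hbvp ▸ hv
  have hp : ‖p‖ = 0 := by
    by_contra h
    have hpn : 0 < ‖p‖ := lt_of_le_of_ne (norm_nonneg p) (Ne.symm h)
    nlinarith [mul_pos (mul_pos hβ hn) hpn]
  simpa using hp

/-- Unique solvability of one backward-Euler step of the weak Galerkin scheme
(equations (21)–(22)) in the possibly degenerate case `c₀ ≥ 0`, relying on the
discrete inf-sup condition for the coupling form `b`. -/
theorem backward_euler_step_unique_solvability_infsup
    {V W : Type*} [NormedAddCommGroup V] [InnerProductSpace ℝ V]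
    [NormedAddCommGroup W] [InnerProductSpace ℝ W]
    [FiniteDimensional ℝ V] [FiniteDimensional ℝ W]
    (a : V →ₗ[ℝ] V →ₗ[ℝ] ℝ)
    (α : ℝ) (hα : 0 < α) (ha_coercive : ∀ v : V, α * ‖v‖ ^ 2 ≤ a v v)
    (d : W →ₗ[ℝ] W →ₗ[ℝ] ℝ) (hd_pos : ∀ q : W, 0 ≤ d q q)
    (b : V →ₗ[ℝ] W →ₗ[ℝ] ℝ)
    (β : ℝ) (hβ : 0 < β)
    (hinfsup : ∀ q : W, ∃ v : V, v ≠ 0 ∧ β * ‖v‖ * ‖q‖ ≤ b v q)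
    (c₀ : ℝ) (hc₀ : 0 ≤ c₀) (τ : ℝ) (hτ : 0 < τ) :
    ∀ (F : V →ₗ[ℝ] ℝ) (G : W →ₗ[ℝ] ℝ),
      ∃! up : V × W,
        (∀ v : V, a up.1 v - b v up.2 = F v) ∧
        (∀ q : W, c₀ * ⟪up.2, q⟫ + b up.1 q + τ * d up.2 q = G q) := by
  intro F G
  -- the bilinear form of the full system
  set T : (V × W) →ₗ[ℝ] Module.Dual ℝ (V × W) :=
    LinearMap.mk₂ ℝ
      (fun x y => a x.1 y.1 - b y.1 x.2 + c₀ * ⟪x.2, y.2⟫ + b x.1 y.2 + τ * d x.2 y.2)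
      (by intro m m' n
          simp [inner_add_left, Prod.fst_add, Prod.snd_add, mul_add]; ring)
      (by intro c m n
          simp [inner_smul_left, Prod.smul_fst, Prod.smul_snd, mul_add]; ring)
      (by intro m n n'
          simp [inner_add_right, Prod.fst_add, Prod.snd_add, mul_add]; ring)
      (by intro c m n
          simp [inner_smul_right, Prod.smul_fst, Prod.smul_snd]; ring) with hT
  have hTapply : ∀ x y : V × W,
      T x y = a x.1 y.1 - b y.1 x.2 + c₀ * ⟪x.2, y.2⟫ + b x.1 y.2 + τ * d x.2 y.2 := by
    intro x y; rw [hT]; rfl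
  have hinj : Function.Injective T := by
    rw [← LinearMap.ker_eq_bot, LinearMap.ker_eq_bot']
    intro x hx
    have h1 : ∀ v : V, a x.1 v - b v x.2 = 0 := by
      intro v
      have := congrArg (fun f : Module.Dual ℝ (V × W) => f (v, 0)) hx
      simp only [hTapply] at this
      simpa using this
    have h2 : ∀ q : W, c₀ * ⟪x.2, q⟫ + b x.1 q + τ * d x.2 q = 0 := by
      intro q
      have := congrArg (fun f : Module.Dual ℝ (V × W) => f (0, q)) hx
      simp only [hTapply] at this
      simpa using this
    obtain ⟨hu, hp⟩ := homogeneous_zero a α hα ha_coercive d hd_pos b β hβ hinfsup c₀ hc₀ τ hτ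
      x.1 x.2 h1 h2
    exact Prod.ext hu hp
  have hsurj : Function.Surjective T := by
    have hdim : Module.finrank ℝ (V × W) = Module.finrank ℝ (Module.Dual ℝ (V × W)) :=
      (Subspace.dual_finrank_eq).symm
    exact (LinearMap.injective_iff_surjective_of_finrank_eq_finrank hdim).mp hinj
  obtain ⟨x, hx⟩ := hsurj (F.comp (LinearMap.fst ℝ V W) + G.comp (LinearMap.snd ℝ V W))
  refine ⟨x, ⟨?_, ?_⟩, ?_⟩
  · intro v
    have := congrArg (fun f : Module.Dual ℝ (V × W) => f (v, 0)) hx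
    simp only [hTapply] at this
    simpa using this
  · intro q
    have := congrArg (fun f : Module.Dual ℝ (V × W) => f (0, q)) hx
    simp only [hTapply] at this
    simpa using this
  · rintro y ⟨hy1, hy2⟩
    apply hinj
    rw [hx]
    apply LinearMap.ext
    rintro ⟨v, q⟩
    have hz : ∀ w : V × W, T y w = a y.1 w.1 - b w.1 y.2 + c₀ * ⟪y.2, w.2⟫ + b y.1 w.2
        + τ * d y.2 w.2 := hTapply y
    simp only [hz, LinearMap.add_apply, LinearMap.comp_apply, LinearMap.fst_apply,
      LinearMap.snd_apply]
    have e1 := hy1 v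
    have e2 := hy2 q
    linarith
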